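/- Let a(t) be positive and decreasing with a(t) ≤ a₀, and n > 0. With P₂(z,t) the quadratic Taylor polynomial at n of e^{a(t)z^{3/2}}, for every z ≥ n and t ≥ 0 one has ∂_z P₂(z, t) ≤ (1 + 3 a₀ z^{1/2}) P₂(z, t), assuming n ≥ 1. -/

import Mathlib

noncomputable def P₂ (a : ℝ → ℝ) (n : ℝ) (z t : ℝ) : ℝ :=
  Real.exp (a t * n^((3:ℝ)/2))
    * (1 + (3/2) * a t * n^((1:ℝ)/2) * (z - n)
        + ((9/4) * (a t)^2 * n + (3/4) * a t * n^(-(1:ℝ)/2)) * (z - n)^2 / 2)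

private lemma P2_key (u s w a₀ d v : ℝ) (hu : 0 < u) (hs1 : 1 ≤ s)
    (hd0 : 0 ≤ d) (hinv_le : v ≤ s) (hv0 : 0 ≤ v)
    (hw0 : 0 < w) (ha₀ : 0 < a₀) (h_us : u * s ≤ a₀ * w) :
    3/2*u*s + (9/4*u^2*s^2 + 3/4*u*v)*d ≤
      (1 + 3*a₀*w) * (1 + 3/2*u*s*d + (9/4*u^2*s^2 + 3/4*u*v)*d^2/2) := by
  nlinarith [mul_nonneg (mul_nonneg hu.le (by linarith : (0:ℝ) ≤ s)) hd0,
    mul_nonneg (sub_nonneg.mpr hinv_le) (mul_nonneg hu.le hd0),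
    mul_nonneg (sub_nonneg.mpr h_us) (mul_nonneg (mul_nonneg hu.le (by linarith : (0:ℝ) ≤ s)) hd0),
    mul_nonneg (mul_nonneg ha₀.le hw0.le) (mul_nonneg (mul_nonneg hu.le (by linarith : (0:ℝ) ≤ s)) hd0),
    mul_nonneg (mul_nonneg (by positivity : (0:ℝ) ≤ 1 + 3*a₀*w)
      (by positivity : (0:ℝ) ≤ 9/4*u^2*s^2 + 3/4*u*v)) (mul_nonneg hd0 hd0),
    mul_nonneg hu.le (by linarith : (0:ℝ) ≤ s)]

theorem P2_deriv_le (a₀ : ℝ) (ha₀ : 0 < a₀) (a : ℝ → ℝ)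
    (hpos : ∀ t : ℝ, 0 ≤ t → 0 < a t ∧ a t ≤ a₀)
    (hdec : ∀ s t : ℝ, 0 ≤ s → s ≤ t → a t ≤ a s)
    (n : ℝ) (hn : 1 ≤ n) :
    ∀ z : ℝ, n ≤ z → ∀ t : ℝ, 0 ≤ t →
      deriv (fun z => P₂ a n z t) z ≤ (1 + 3 * a₀ * Real.sqrt z) * P₂ a n z t := by
  intro z hz t ht
  obtain ⟨hu, hua⟩ := hpos t ht
  have hn0 : (0:ℝ) < n := lt_of_lt_of_le one_pos hn
  -- facts about powers of n and sqrt z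
  have hsr : n ^ ((1:ℝ)/2) = Real.sqrt n := (Real.sqrt_eq_rpow n).symm
  have hs1 : (1:ℝ) ≤ n ^ ((1:ℝ)/2) := by
    rw [hsr]; exact Real.one_le_sqrt.mpr hn
  have hs0 : (0:ℝ) < n ^ ((1:ℝ)/2) := lt_of_lt_of_le one_pos hs1
  have hsw : n ^ ((1:ℝ)/2) ≤ Real.sqrt z := by
    rw [hsr]; exact Real.sqrt_le_sqrt hz
  have hw0 : (0:ℝ) < Real.sqrt z := lt_of_lt_of_le hs0 hsw
  have hns : n = (n ^ ((1:ℝ)/2))^2 := by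
    rw [hsr, Real.sq_sqrt hn0.le]
  have hni : n ^ (-(1:ℝ)/2) = (n ^ ((1:ℝ)/2))⁻¹ := by
    rw [← Real.rpow_neg_one, ← Real.rpow_mul hn0.le]
    norm_num
  have hinv_le : (n ^ ((1:ℝ)/2))⁻¹ ≤ n ^ ((1:ℝ)/2) := by
    rw [inv_le_comm₀ hs0 hs0]
    calc (n ^ ((1:ℝ)/2))⁻¹ ≤ 1 := by rw [inv_le_one_iff₀]; right; exact hs1
    _ ≤ n ^ ((1:ℝ)/2) := hs1
  have hv0 : (0:ℝ) ≤ (n ^ ((1:ℝ)/2))⁻¹ := by positivity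
  have h_us : a t * n ^ ((1:ℝ)/2) ≤ a₀ * Real.sqrt z := by nlinarith
  -- abbreviations
  set u := a t with hu'
  set C := Real.exp (u * n ^ ((3:ℝ)/2)) with hC
  set b := (3/2) * u * n ^ ((1:ℝ)/2) with hb
  set c := (9/4) * u^2 * n + (3/4) * u * n ^ (-(1:ℝ)/2) with hc
  have hform : ∀ y : ℝ, P₂ a n y t = C * (1 + b * (y - n) + c * (y - n)^2 / 2) := by
    intro y; simp only [P₂, hC, hb, hc, ← hu']
  -- derivative computation
  have hder : HasDerivAt (fun z => P₂ a n z t) (C * (b + c * (z - n))) z := by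
    have h0 : HasDerivAt (fun z : ℝ => z - n) 1 z := (hasDerivAt_id z).sub_const n
    have h1 : HasDerivAt (fun z : ℝ => b * (z - n)) b z := by
      simpa using h0.const_mul b
    have h2 : HasDerivAt (fun z : ℝ => (z - n)^2) (2 * (z - n)) z := by
      simpa using h0.fun_pow 2
    have h3 : HasDerivAt (fun z : ℝ => c * (z - n)^2 / 2) (c * (z - n)) z := by
      have : HasDerivAt (fun x : ℝ => c * (x - n) ^ 2 / 2) (c * (2 * (z - n)) / 2) z :=
        (h2.const_mul c).div_const 2
      convert this using 1
      ring
    have h4 : HasDerivAt (fun z : ℝ => 1 + b * (z - n) + c * (z - n)^2 / 2)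
        (b + c * (z - n)) z := (h1.const_add 1).add h3
    have h5 := h4.const_mul C
    simp only [hform]
    exact h5
  rw [hder.deriv, hform z]
  have hC0 : 0 < C := Real.exp_pos _
  have hd0 : 0 ≤ z - n := sub_nonneg.mpr hz
  -- key polynomial inequality
  have key : b + c * (z - n) ≤
      (1 + 3 * a₀ * Real.sqrt z) * (1 + b * (z - n) + c * (z - n)^2 / 2) := by
    have := P2_key u (n ^ ((1:ℝ)/2)) (Real.sqrt z) a₀ (z - n) ((n ^ ((1:ℝ)/2))⁻¹)
      hu hs1 hd0 hinv_le hv0 hw0 ha₀ h_us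
    calc b + c * (z - n)
        = 3/2*u*(n ^ ((1:ℝ)/2)) + (9/4*u^2*(n ^ ((1:ℝ)/2))^2
            + 3/4*u*(n ^ ((1:ℝ)/2))⁻¹)*(z - n) := by
          rw [hb, hc, hni]; rw [← hns]
      _ ≤ (1 + 3*a₀*Real.sqrt z) * (1 + 3/2*u*(n ^ ((1:ℝ)/2))*(z - n)
            + (9/4*u^2*(n ^ ((1:ℝ)/2))^2 + 3/4*u*(n ^ ((1:ℝ)/2))⁻¹)*(z - n)^2/2) := this
      _ = (1 + 3 * a₀ * Real.sqrt z) * (1 + b * (z - n) + c * (z - n)^2 / 2) := by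
          rw [hb, hc, hni]; rw [← hns]
  calc C * (b + c * (z - n))
      ≤ C * ((1 + 3 * a₀ * Real.sqrt z) * (1 + b * (z - n) + c * (z - n)^2 / 2)) :=
        mul_le_mul_of_nonneg_left key hC0.le
    _ = (1 + 3 * a₀ * Real.sqrt z) * (C * (1 + b * (z - n) + c * (z - n)^2 / 2)) := by ring
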